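/- arXiv:2308.11967 — 3 statements merged into one kernel-verified Lean document; each statement's English description precedes it below -/
import Mathlib

section
/- In Cat, a functor F : 𝒞 → 𝒟 has the right lifting property with respect to 0 → 1, 2 → 𝟚, and the parallel-pair collapse ℙ → 𝟚 if and only if F is fully faithful and surjective on objects. -/
open CategoryTheory CategoryTheory.Limits

namespace CatWfs

/-- The inclusion `0 → 1` of the empty category into the terminal category. -/
def emptyToPt : Cat.of (Discrete PEmpty) ⟶ Cat.of (Discrete PUnit) :=
  (Functor.empty (Discrete PUnit)).toCatHom

/-- The inclusion `2 → 𝟚` of the discrete two-object category into the interval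
category (`Bool` with its usual order `false < true`). -/
noncomputable def twoToInterval : Cat.of (Discrete Bool) ⟶ Cat.of Bool :=
  (Discrete.functor (fun b => b)).toCatHom

/-- The functor `2 → 1` collapsing the discrete two-object category. -/
def twoToPt : Cat.of (Discrete Bool) ⟶ Cat.of (Discrete PUnit) :=
  (Functor.star (Discrete Bool)).toCatHom

/-- The functor `ℙ → 𝟚` from the parallel-pair category to the interval category
sending both nonidentity arrows to the unique nonidentity arrow. -/
noncomputable def parallelPairToInterval : Cat.of WalkingParallelPair ⟶ Cat.of Bool :=
  (show WalkingParallelPair ⥤ Bool from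
    parallelPair (homOfLE (by decide : (false : Bool) ≤ true))
      (homOfLE (by decide : (false : Bool) ≤ true))).toCatHom

end CatWfs

open CatWfs

section Aux

/-- The unique nonidentity arrow of the interval category. -/
def boolHom : (false : Bool) ⟶ true := homOfLE (by decide)

variable {C : Type} [SmallCategory C]

/-- A functor out of the interval category determined by a single morphism. -/
noncomputable def intervalFunctor {c0 c1 : C} (m : c0 ⟶ c1) : Bool ⥤ C where
  obj b := bif b then c1 else c0
  map {x y} f :=
    match x, y, f with
    | false, false, _ => 𝟙 c0
    | false, true, _ => m
    | true, true, _ => 𝟙 c1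
    | true, false, f => absurd f.down.down (by decide)
  map_id x := by cases x <;> rfl
  map_comp {x y z} f g := by
    cases x <;> cases y <;> cases z <;>
      first
        | exact absurd f.down.down (by decide)
        | exact absurd g.down.down (by decide)
        | simp

@[simp] lemma intervalFunctor_obj_false {c0 c1 : C} (m : c0 ⟶ c1) :
    (intervalFunctor m).obj false = c0 := rfl

@[simp] lemma intervalFunctor_obj_true {c0 c1 : C} (m : c0 ⟶ c1) :
    (intervalFunctor m).obj true = c1 := rfl

@[simp] lemma intervalFunctor_map_hom {c0 c1 : C} (m : c0 ⟶ c1) (f : (false : Bool) ⟶ true) :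
    (intervalFunctor m).map f = m := rfl

end Aux

/-- a functor between small categories has the right lifting property with
respect to `0 → 1`, `2 → 𝟚` and the parallel-pair collapse `ℙ → 𝟚` iff it is fully
faithful and surjective on objects. -/
theorem rlp_iff_fullyFaithful_and_surjOnObj
    {C D : Type} [SmallCategory C] [SmallCategory D] (F : C ⥤ D) :
    (HasLiftingProperty emptyToPt (show Cat.of C ⟶ Cat.of D from F.toCatHom) ∧
     HasLiftingProperty twoToInterval (show Cat.of C ⟶ Cat.of D from F.toCatHom) ∧
     HasLiftingProperty parallelPairToInterval (show Cat.of C ⟶ Cat.of D from F.toCatHom)) ↔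
    (F.Full ∧ F.Faithful ∧ Function.Surjective F.obj) := by
  constructor
  · rintro ⟨h0, h2, hP⟩
    refine ⟨?_, ?_, ?_⟩
    · -- Full, via twoToInterval
      refine ⟨fun {c c'} ψ => ?_⟩
      have sq : CommSq
          (show Cat.of (Discrete Bool) ⟶ Cat.of C from
            (Discrete.functor (fun b => bif b then c' else c)).toCatHom)
          twoToInterval (show Cat.of C ⟶ Cat.of D from F.toCatHom)
          (show Cat.of Bool ⟶ Cat.of D from (intervalFunctor ψ).toCatHom) := by
        refine ⟨Cat.Hom.ext (show (Discrete.functor fun b => bif b then c' else c) ⋙ F =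
          (Discrete.functor (fun b => b) : Discrete Bool ⥤ Bool) ⋙ intervalFunctor ψ from ?_)⟩
        apply CategoryTheory.Functor.ext
        · rintro ⟨x⟩ ⟨y⟩ f
          obtain rfl : x = y := f.down.down
          have : f = 𝟙 _ := Subsingleton.elim _ _
          rw [this]; cases x <;> simp <;> rfl
        · rintro ⟨b⟩; cases b <;> rfl
      obtain ⟨⟨l, hl, hr⟩⟩ := (h2.sq_hasLift sq).exists_lift
      obtain ⟨l, rfl⟩ := (Functor.equivCatHom _ _).surjective l
      have hl' : (Discrete.functor (fun b => b) : Discrete Bool ⥤ Bool) ⋙ l =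
          Discrete.functor (fun b => bif b then c' else c) := congrArg Cat.Hom.toFunctor hl
      have hr' : l ⋙ F = intervalFunctor ψ := congrArg Cat.Hom.toFunctor hr
      have e0 : l.obj false = c := Functor.congr_obj hl' ⟨false⟩
      have e1 : l.obj true = c' := Functor.congr_obj hl' ⟨true⟩
      refine ⟨eqToHom e0.symm ≫ l.map boolHom ≫ eqToHom e1, ?_⟩
      have h := Functor.congr_hom hr' boolHom
      simp only [Functor.comp_map, intervalFunctor_map_hom] at h
      simp [h, eqToHom_map]; erw [eqToHom_trans_assoc, eqToHom_refl, Category.id_comp, eqToHom_trans, eqToHom_refl, Category.comp_id]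
    · -- Faithful, via parallelPairToInterval
      refine ⟨fun {c c'} g₁ g₂ hg => ?_⟩
      have sq : CommSq
          (show Cat.of WalkingParallelPair ⟶ Cat.of C from (parallelPair g₁ g₂).toCatHom)
          parallelPairToInterval (show Cat.of C ⟶ Cat.of D from F.toCatHom)
          (show Cat.of Bool ⟶ Cat.of D from (intervalFunctor (F.map g₁)).toCatHom) := by
        refine ⟨Cat.Hom.ext (show parallelPair g₁ g₂ ⋙ F =
          (parallelPair (homOfLE (by decide : (false : Bool) ≤ true))
            (homOfLE (by decide : (false : Bool) ≤ true)) : WalkingParallelPair ⥤ Bool) ⋙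
            intervalFunctor (F.map g₁) from ?_)⟩
        apply CategoryTheory.Functor.ext
        · intro X Y f
          cases f using WalkingParallelPairHom.casesOn with
          | left => simp; erw [eqToHom_refl, Category.id_comp]
          | right => simp [hg]; erw [eqToHom_refl, Category.id_comp]
          | id => simp
        · intro x; cases x <;> rfl
      obtain ⟨⟨l, hl, hr⟩⟩ := (hP.sq_hasLift sq).exists_lift
      obtain ⟨l, rfl⟩ := (Functor.equivCatHom _ _).surjective l
      have hl' : (parallelPair (homOfLE (by decide : (false : Bool) ≤ true))
            (homOfLE (by decide : (false : Bool) ≤ true)) : WalkingParallelPair ⥤ Bool) ⋙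
          l = parallelPair g₁ g₂ := congrArg Cat.Hom.toFunctor hl
      have h1 := Functor.congr_hom hl'.symm WalkingParallelPairHom.left
      have h2 := Functor.congr_hom hl'.symm WalkingParallelPairHom.right
      simp only [Functor.comp_map, parallelPair_map_left, parallelPair_map_right] at h1 h2
      exact h1.trans h2.symm
    · -- surjective on objects, via emptyToPt
      intro d
      have sq : CommSq (show Cat.of (Discrete PEmpty) ⟶ Cat.of C from (Functor.empty C).toCatHom)
          emptyToPt (show Cat.of C ⟶ Cat.of D from F.toCatHom)
          (show Cat.of (Discrete PUnit) ⟶ Cat.of D from ((Functor.const (Discrete PUnit)).obj d).toCatHom) :=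
        ⟨Cat.Hom.ext (Functor.empty_ext' _ _)⟩
      obtain ⟨⟨l, _, hr⟩⟩ := (h0.sq_hasLift sq).exists_lift
      exact ⟨l.toFunctor.obj ⟨⟨⟩⟩, Functor.congr_obj (congrArg Cat.Hom.toFunctor hr) ⟨⟨⟩⟩⟩
  · rintro ⟨hFull, hFaithful, hSurj⟩
    haveI := hFull; haveI := hFaithful
    refine ⟨?_, ?_, ?_⟩
    · -- lifting against emptyToPt
      constructor
      intro u v sq
      obtain ⟨v, rfl⟩ := (Functor.equivCatHom _ _).surjective v
      obtain ⟨c, hc⟩ := hSurj (v.obj ⟨⟨⟩⟩)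
      refine ⟨⟨⟨show Cat.of (Discrete PUnit) ⟶ Cat.of C from
        ((Functor.const (Discrete PUnit)).obj c).toCatHom, Cat.Hom.ext (Functor.empty_ext' _ _),
        Cat.Hom.ext ?_⟩⟩⟩
      show (Functor.const (Discrete PUnit)).obj c ⋙ F = v
      apply CategoryTheory.Functor.ext
      · rintro ⟨⟨⟩⟩ ⟨⟨⟩⟩ f
        have : f = 𝟙 _ := Subsingleton.elim _ _
        rw [this]; simp
      · rintro ⟨⟨⟩⟩; exact hc
    · -- lifting against twoToInterval
      constructor
      intro u v sq
      obtain ⟨u, rfl⟩ := (Functor.equivCatHom _ _).surjective u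
      obtain ⟨v, rfl⟩ := (Functor.equivCatHom _ _).surjective v
      have w' : u ⋙ F =
          (Discrete.functor (fun b => b) : Discrete Bool ⥤ Bool) ⋙ v := congrArg Cat.Hom.toFunctor sq.w
      have e0 : F.obj (u.obj ⟨false⟩) =
          v.obj false := Functor.congr_obj w' ⟨false⟩
      have e1 : F.obj (u.obj ⟨true⟩) =
          v.obj true := Functor.congr_obj w' ⟨true⟩
      set m : u.obj ⟨false⟩ ⟶
          u.obj ⟨true⟩ :=
        F.preimage (eqToHom e0 ≫ v.map boolHom ≫ eqToHom e1.symm) with hm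
      refine ⟨⟨⟨show Cat.of Bool ⟶ Cat.of C from (intervalFunctor m).toCatHom, Cat.Hom.ext ?_, Cat.Hom.ext ?_⟩⟩⟩
      · show (Discrete.functor (fun b => b) : Discrete Bool ⥤ Bool) ⋙ intervalFunctor m =
          u
        apply CategoryTheory.Functor.ext
        · rintro ⟨x⟩ ⟨y⟩ f
          obtain rfl : x = y := f.down.down
          have : f = 𝟙 _ := Subsingleton.elim _ _
          rw [this]; cases x <;> simp <;> rfl
        · rintro ⟨b⟩; cases b <;> rfl
      · show intervalFunctor m ⋙ F = v
        apply CategoryTheory.Functor.ext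
        · intro x y f
          cases x <;> cases y
          · have : f = 𝟙 _ := Subsingleton.elim _ _
            rw [this]; simp; erw [eqToHom_trans]; rfl
          · have : f = boolHom := Subsingleton.elim _ _
            rw [this]
            show F.map m = _
            rw [hm, F.map_preimage]; rfl
          · exact absurd f.down.down (by decide)
          · have : f = 𝟙 _ := Subsingleton.elim _ _
            rw [this]; simp; erw [eqToHom_trans, eqToHom_refl]
        · intro b; cases b
          · exact e0
          · exact e1
    · -- lifting against parallelPairToInterval
      constructor
      intro u v sq
      obtain ⟨u, rfl⟩ := (Functor.equivCatHom _ _).surjective u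
      obtain ⟨v, rfl⟩ := (Functor.equivCatHom _ _).surjective v
      have w' : u ⋙ F =
          (parallelPair (homOfLE (by decide : (false : Bool) ≤ true))
            (homOfLE (by decide : (false : Bool) ≤ true)) : WalkingParallelPair ⥤ Bool) ⋙
            v := congrArg Cat.Hom.toFunctor sq.w
      have e0 : F.obj (u.obj .zero) =
          v.obj false := Functor.congr_obj w' .zero
      have e1 : F.obj (u.obj .one) =
          v.obj true := Functor.congr_obj w' .one
      have key : u.map WalkingParallelPairHom.left =
          u.map WalkingParallelPairHom.right := by
        apply hFaithful.map_injective
        have h1 := Functor.congr_hom w' WalkingParallelPairHom.left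
        have h2 := Functor.congr_hom w' WalkingParallelPairHom.right
        simp only [Functor.comp_map] at h1 h2
        exact h1.trans h2.symm
      refine ⟨⟨⟨show Cat.of Bool ⟶ Cat.of C from
        (intervalFunctor (u.map
          WalkingParallelPairHom.left)).toCatHom, Cat.Hom.ext ?_, Cat.Hom.ext ?_⟩⟩⟩
      · show (parallelPair (homOfLE (by decide : (false : Bool) ≤ true))
            (homOfLE (by decide : (false : Bool) ≤ true)) : WalkingParallelPair ⥤ Bool) ⋙
          intervalFunctor (u.map
            WalkingParallelPairHom.left) = u
        apply CategoryTheory.Functor.ext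
        · intro X Y f
          cases f using WalkingParallelPairHom.casesOn with
          | left => simp; erw [eqToHom_refl, Category.id_comp]
          | right => simp; erw [eqToHom_refl, Category.id_comp]; exact key
          | id => simp
        · intro x; cases x <;> rfl
      · show intervalFunctor (u.map
            WalkingParallelPairHom.left) ⋙ F = v
        apply CategoryTheory.Functor.ext
        · intro x y f
          cases x <;> cases y
          · have : f = 𝟙 _ := Subsingleton.elim _ _
            rw [this]; simp; erw [eqToHom_trans]; rfl
          · have h1 := Functor.congr_hom w' WalkingParallelPairHom.left
            simp only [Functor.comp_map] at h1
            have : f = (parallelPair (homOfLE (by decide : (false : Bool) ≤ true))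
            (homOfLE (by decide : (false : Bool) ≤ true)) : WalkingParallelPair ⥤ Bool).map WalkingParallelPairHom.left := Subsingleton.elim _ _
            rw [this]
            exact h1
          · exact absurd f.down.down (by decide)
          · have : f = 𝟙 _ := Subsingleton.elim _ _
            rw [this]; simp; erw [eqToHom_trans]; rfl
        · intro b; cases b
          · exact e0
          · exact e1
end

section
/- Let 𝔛 be a locally finitely presentable category with a weak factorization system (ℰ, ℱ) cofibrantly generated by a set of arrows between compact objects, and suppose the full subcategory of compact ℰ-cofibrant objects (compact objects X with 0 → X in ℰ) is dense in 𝔛. Then every map in ℱ is a regular epimorphism. -/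
open CategoryTheory CategoryTheory.Limits Opposite

universe v u

namespace CompactArrows

variable {C : Type u} [Category.{v} C]

/-- The cocone on `D ⋙ Hom(X, -)` induced by a cocone on `D`. -/
def homCocone {J : Type v} [SmallCategory J] {D : J ⥤ C} (c : Cocone D) (X : C) :
    Cocone (D ⋙ coyoneda.obj (op X)) where
  pt := X ⟶ c.pt
  ι :=
    { app := fun j => TypeCat.ofHom (fun (g : X ⟶ D.obj j) => g ≫ c.ι.app j)
      naturality := by
        intro j j' t
        ext g
        simp }

/-- The canonical comparison map `colim_j Hom(X, D_j) ⟶ Hom(X, colim D)`,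
relative to a chosen (co)limiting cocone `c` on `D`. -/
noncomputable def canMap {J : Type v} [SmallCategory J] {D : J ⥤ C} (c : Cocone D) (X : C) :
    colimit (D ⋙ coyoneda.obj (op X)) ⟶ (X ⟶ c.pt) :=
  colimit.desc _ (homCocone c X)

/-- `X` is a compact object: `Hom(X, -)` preserves small filtered colimits. -/
def CompactObj (X : C) : Prop :=
  ∀ (J : Type v) (_ : SmallCategory J) (_ : IsFiltered J) (D : J ⥤ C) (c : Cocone D),
    IsColimit c → IsIso (canMap c X)

/-- `f : A ⟶ B` is a compact arrow: for every small filtered diagram `D` the comparison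
square between `colim_j Hom(B, D_j) → Hom(B, colim D)` and
`colim_j Hom(A, D_j) → Hom(A, colim D)` (via precomposition with `f`) is a pullback of sets. -/
def CompactArrow {A B : C} (f : A ⟶ B) : Prop :=
  ∀ (J : Type v) (_ : SmallCategory J) (_ : IsFiltered J) (D : J ⥤ C) (c : Cocone D),
    IsColimit c →
      IsPullback (canMap c B)
        (colimMap (Functor.whiskerLeft D (coyoneda.map f.op)))
        (TypeCat.ofHom (fun (g : B ⟶ c.pt) => f ≫ g))
        (canMap c A)

end CompactArrows

namespace CategoryTheory.Presheaf

/-- The restricted Yoneda functor `ℰ ⥤ Cᵒᵖ ⥤ Type v₁` of Mathlib (Dec 2024),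
`E ↦ (c ↦ (A.obj c ⟶ E))`, without universe lifting. -/
def restrictedYoneda.{v₁, u₁, u₂} {C : Type u₁} [Category.{v₁} C] {ℰ : Type u₂}
    [Category.{v₁} ℰ] (A : C ⥤ ℰ) : ℰ ⥤ Cᵒᵖ ⥤ Type v₁ :=
  yoneda ⋙ (Functor.whiskeringLeft _ _ (Type v₁)).obj (Functor.op A)

end CategoryTheory.Presheaf

open CompactArrows

/-- let `L` be a locally finitely presentable category (cocomplete, with an
essentially small dense subcategory of compact objects) carrying a weak factorization
system `(E, F)` which is cofibrantly generated by a set of arrows between compact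
objects, and suppose the full subcategory of compact `E`-cofibrant objects (compact
objects `X` with `0 ⟶ X` in `E`) is dense in `L` (its restricted Yoneda / nerve functor
is fully faithful). Then every map in `F` is a regular epimorphism. -/
theorem full_maps_are_regular_epis
    {L : Type u} [Category.{v} L] [HasColimits L]
    -- local finite presentability: the compact objects are essentially small and dense
    [EssentiallySmall.{v} (ObjectProperty.FullSubcategory (CompactObj (C := L)))]
    (hlfp_dense : (Presheaf.restrictedYoneda
      (ObjectProperty.ι (CompactObj (C := L)))).Full ∧
      (Presheaf.restrictedYoneda
        (ObjectProperty.ι (CompactObj (C := L)))).Faithful)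
    -- the weak factorization system (E, F)
    (E F : MorphismProperty L)
    (hlift : ∀ {A B X Y : L} (e : A ⟶ B) (f : X ⟶ Y), E e → F f → HasLiftingProperty e f)
    (hE : ∀ {A B : L} (e : A ⟶ B),
      (∀ {X Y : L} (f : X ⟶ Y), F f → HasLiftingProperty e f) → E e)
    (hF : ∀ {X Y : L} (f : X ⟶ Y),
      (∀ {A B : L} (e : A ⟶ B), E e → HasLiftingProperty e f) → F f)
    (hfact : ∀ {X Y : L} (f : X ⟶ Y),
      ∃ (Z : L) (e : X ⟶ Z) (m : Z ⟶ Y), E e ∧ F m ∧ e ≫ m = f)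
    -- cofibrant generation by a set of arrows between compact objects
    (κ : Type v) (dom cod : κ → L) (gen : ∀ i, dom i ⟶ cod i)
    (hgen_compact : ∀ i, CompactObj (dom i) ∧ CompactObj (cod i))
    (hgen : ∀ {X Y : L} (f : X ⟶ Y), F f ↔ ∀ i, HasLiftingProperty (gen i) f)
    -- density of the compact E-cofibrant objects (0-extensions)
    (hdense : (Presheaf.restrictedYoneda (ObjectProperty.ι
        (fun X : L => CompactObj X ∧ E (initial.to X)))).Full ∧
      (Presheaf.restrictedYoneda (ObjectProperty.ι
        (fun X : L => CompactObj X ∧ E (initial.to X)))).Faithful) :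
    ∀ {X Y : L} (f : X ⟶ Y), F f → Nonempty (RegularEpi f) := by
  intro X Y f hf
  classical
  -- surjectivity against cofibrant compacts
  have surj : ∀ (A : L), E (initial.to A) → ∀ g : A ⟶ Y, ∃ h : A ⟶ X, h ≫ f = g := by
    intro A hEA g
    haveI := hlift (initial.to A) f hEA hf
    have sq : CommSq (initial.to X) (initial.to A) f g := ⟨initial.hom_ext _ _⟩
    exact ⟨sq.lift, sq.fac_right⟩
  -- small model of the compact objects
  let S := SmallModel.{v} (ObjectProperty.FullSubcategory (CompactObj (C := L)))
  let e := equivSmallModel.{v} (ObjectProperty.FullSubcategory (CompactObj (C := L)))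
  let ob : S → L := fun s => (e.inverse.obj s).obj
  let ι := Σ s : S, {p : (ob s ⟶ X) × (ob s ⟶ X) // p.1 ≫ f = p.2 ≫ f}
  let Z : L := ∐ (fun i : ι => ob i.1)
  let u : Z ⟶ X := Sigma.desc fun i => i.2.1.1
  let v' : Z ⟶ X := Sigma.desc fun i => i.2.1.2
  have wuv : u ≫ f = v' ≫ f := by
    apply colimit.hom_ext
    rintro ⟨i⟩
    simpa [u, v', Z] using i.2.2
  -- the key property: any q coequalizing u, v' coequalizes every parallel pair
  -- out of a compact object whose compositions with f agree
  have key : ∀ (W' : L) (q : X ⟶ W'), u ≫ q = v' ≫ q →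
      ∀ (A : L), CompactObj A → ∀ (h h' : A ⟶ X), h ≫ f = h' ≫ f → h ≫ q = h' ≫ q := by
    intro W' q hq A hA h h' hh
    let φ : e.inverse.obj (e.functor.obj ⟨A, hA⟩) ≅ (⟨A, hA⟩ : ObjectProperty.FullSubcategory (CompactObj (C := L))) :=
      e.unitIso.symm.app ⟨A, hA⟩
    let ψ : ob (e.functor.obj ⟨A, hA⟩) ≅ A :=
      (ObjectProperty.ι (CompactObj (C := L))).mapIso φ
    let i : ι := ⟨e.functor.obj ⟨A, hA⟩, ⟨(ψ.hom ≫ h, ψ.hom ≫ h'), by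
      rw [Category.assoc, Category.assoc, hh]⟩⟩
    have h1 : Sigma.ι (fun i : ι => ob i.1) i ≫ u = ψ.hom ≫ h := by simp [u, i]
    have h2 : Sigma.ι (fun i : ι => ob i.1) i ≫ v' = ψ.hom ≫ h' := by simp [v', i]
    have := congrArg (fun k => Sigma.ι (fun i : ι => ob i.1) i ≫ k) hq
    simp only [← Category.assoc, h1, h2] at this
    have := congrArg (fun k => ψ.inv ≫ k) this
    simpa using this
  -- notation for the nerve functor
  let N := Presheaf.restrictedYoneda (ObjectProperty.ι
      (fun X : L => CompactObj X ∧ E (initial.to X)))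
  -- f is an epimorphism
  have fepi : Epi f := by
    constructor
    intro W' a b hab
    apply hdense.2.map_injective (F := N)
    ext A g
    obtain ⟨h, hh⟩ := surj A.unop.obj A.unop.2.2 g
    show g ≫ a = g ≫ b
    rw [← hh, Category.assoc, Category.assoc, hab]
  -- existence of the factorization through f
  have exists_t : ∀ (W' : L) (q : X ⟶ W'), u ≫ q = v' ≫ q → ∃ t : Y ⟶ W', f ≫ t = q := by
    intro W' q hq
    let ch : ∀ (A : ObjectProperty.FullSubcategory (fun X : L => CompactObj X ∧ E (initial.to X)))
        (g : A.obj ⟶ Y), (A.obj ⟶ X) := fun A g => (surj A.obj A.2.2 g).choose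
    have ch_spec : ∀ A g, ch A g ≫ f = g := fun A g => (surj A.obj A.2.2 g).choose_spec
    have ch_q : ∀ A g (h : A.obj ⟶ X), h ≫ f = g → h ≫ q = ch A g ≫ q := by
      intro A g h hh
      exact key W' q hq A.obj A.2.1 h (ch A g) (by rw [hh, ch_spec])
    let τ : N.obj Y ⟶ N.obj W' :=
      { app := fun A => TypeCat.ofHom (fun g => ch A.unop g ≫ q)
        naturality := by
          intro A A' m
          ext g
          show ch A'.unop _ ≫ q = (ObjectProperty.ι _).map m.unop ≫ ch A.unop g ≫ q
          rw [← Category.assoc]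
          exact (ch_q A'.unop _ ((ObjectProperty.ι _).map m.unop ≫ ch A.unop g)
            (by rw [Category.assoc]; exact congrArg ((ObjectProperty.ι _).map m.unop ≫ ·) (ch_spec (unop A) g))).symm }
    obtain ⟨t, ht⟩ := hdense.1.map_surjective (F := N) τ
    refine ⟨t, hdense.2.map_injective (F := N) ?_⟩
    ext A g
    let gf : A.unop.obj ⟶ Y := g ≫ f
    have h1 : (g ≫ f) ≫ t = ch A.unop (g ≫ f) ≫ q := congrArg (fun k => k.app A gf) ht
    have h2 : g ≫ q = ch A.unop (g ≫ f) ≫ q := ch_q A.unop (g ≫ f) g rfl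
    show g ≫ f ≫ t = g ≫ q
    exact (Category.assoc _ _ _).symm.trans (h1.trans h2.symm)
  -- assemble the regular epi structure
  refine ⟨⟨Z, u, v', wuv, ?_⟩⟩
  refine Cofork.IsColimit.mk _
    (fun s => (exists_t s.pt s.π s.condition).choose)
    (fun s => (exists_t s.pt s.π s.condition).choose_spec)
    (fun s m hm => ?_)
  have hm' : f ≫ m = s.π := hm
  have := (exists_t s.pt s.π s.condition).choose_spec
  exact (cancel_epi f).mp (by rw [hm', this])
end

section
/- Let 𝔏 be a locally finitely presentable category with weak factorization system (ℰ, ℱ), let f : A → B have a kernel pair p, q : R → A with p, q ∈ ℱ, and let e : A → C be the coequalizer of p and q. Assume the full subcategory of compact 0-extensions is dense in 𝔏 and that coequalizers of such equivalence relations are effective with full coequalizer map (so e ∈ ℱ and (p,q) is the kernel pair of e). Then the unique map m : C → B with m∘e = f is a monomorphism. -/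
open CategoryTheory CategoryTheory.Limits Opposite

universe v u

open CompactArrows

/-- let `L` be a locally finitely presentable category with a weak
factorization system `(E, F)`, let `f : A ⟶ B` have kernel pair `p, q : R ⟶ A` (the
pullback of `f` against itself) with `p, q ∈ F`, and let `e : A ⟶ C` be the coequalizer
of `p, q`. Assume the compact 0-extensions are dense (they jointly detect equality of
parallel arrows), and that the coequalizer is effective with full coequalizer map, i.e.
`e ∈ F` and `(p, q)` is the kernel pair of `e`. Then the unique `m : C ⟶ B` with
`m ∘ e = f` is a monomorphism. -/
theorem comparison_map_is_mono
    {L : Type u} [Category.{v} L] [HasColimits L] [HasLimits L]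
    [EssentiallySmall.{v} (ObjectProperty.FullSubcategory (CompactObj (C := L)))]
    (E F : MorphismProperty L)
    (hlift : ∀ {A B X Y : L} (e : A ⟶ B) (g : X ⟶ Y), E e → F g → HasLiftingProperty e g)
    -- density: maps out of compact 0-extensions jointly detect equality
    (hdense : ∀ {X Y : L} (u v : X ⟶ Y),
      (∀ (E₀ : L), CompactObj E₀ → E (initial.to E₀) →
        ∀ h : E₀ ⟶ X, h ≫ u = h ≫ v) → u = v)
    {A B : L} (f : A ⟶ B)
    -- the kernel pair of f is componentwise full
    (hp : F (pullback.fst f f)) (hq : F (pullback.snd f f))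
    -- the coequalizer of the kernel pair is full and effective
    (he : F (coequalizer.π (pullback.fst f f) (pullback.snd f f)))
    (heff : IsPullback (pullback.fst f f) (pullback.snd f f)
      (coequalizer.π (pullback.fst f f) (pullback.snd f f))
      (coequalizer.π (pullback.fst f f) (pullback.snd f f))) :
    Mono (coequalizer.desc f pullback.condition) := by
  constructor
  intro X u v huv
  apply hdense
  intro E₀ _ hE k
  have hl := hlift (initial.to E₀) _ hE he
  have sq1 : CommSq (initial.to A) (initial.to E₀)
      (coequalizer.π (pullback.fst f f) (pullback.snd f f)) (k ≫ u) := ⟨initial.hom_ext _ _⟩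
  have sq2 : CommSq (initial.to A) (initial.to E₀)
      (coequalizer.π (pullback.fst f f) (pullback.snd f f)) (k ≫ v) := ⟨initial.hom_ext _ _⟩
  haveI := hl
  set l := sq1.lift with _hldef
  set l' := sq2.lift with _hl'def
  have hl1 : l ≫ coequalizer.π (pullback.fst f f) (pullback.snd f f) = k ≫ u := sq1.fac_right
  have hl2 : l' ≫ coequalizer.π (pullback.fst f f) (pullback.snd f f) = k ≫ v := sq2.fac_right
  have hf : l ≫ f = l' ≫ f := by
    calc l ≫ f = (l ≫ coequalizer.π _ _) ≫ coequalizer.desc f pullback.condition := by simp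
      _ = k ≫ u ≫ coequalizer.desc f pullback.condition := by rw [hl1, Category.assoc]
      _ = k ≫ v ≫ coequalizer.desc f pullback.condition := by rw [huv]
      _ = (l' ≫ coequalizer.π _ _) ≫ coequalizer.desc f pullback.condition := by
          rw [hl2, Category.assoc]
      _ = l' ≫ f := by simp
  have := pullback.lift_fst l l' hf
  have hsnd := pullback.lift_snd l l' hf
  calc k ≫ u = l ≫ coequalizer.π _ _ := hl1.symm
    _ = pullback.lift l l' hf ≫ pullback.fst f f ≫ coequalizer.π _ _ := by
        rw [← Category.assoc, this]
    _ = pullback.lift l l' hf ≫ pullback.snd f f ≫ coequalizer.π _ _ := by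
        rw [coequalizer.condition]
    _ = l' ≫ coequalizer.π _ _ := by rw [← Category.assoc, hsnd]
    _ = k ≫ v := hl2
end
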